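/- Let b, c be norm-one purely imaginary quaternions satisfying b·y·(a·x̄·ā − c·x̄·c̄)·c = y·(a·x̄·ā − c·x̄·c̄) for all quaternions x, y, where a is a norm-one purely imaginary quaternion. Then c = a or c = −a. -/

import Mathlib

open Quaternion

lemma central_real (u : Quaternion ℝ) (h : ∀ z, u * z = z * u) :
    u = (u.re : Quaternion ℝ) := by
  have hi := h ⟨0,1,0,0⟩
  have hj := h ⟨0,0,1,0⟩
  clear h
  rw [Quaternion.ext_iff] at hi hj ⊢
  erw [Quaternion.re_mul, Quaternion.imI_mul, Quaternion.imJ_mul, Quaternion.imK_mul, Quaternion.re_mul, Quaternion.imI_mul, Quaternion.imJ_mul, Quaternion.imK_mul] at hi hj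
  obtain ⟨e1,e2,e3,e4⟩ := hi; obtain ⟨f1,f2,f3,f4⟩ := hj
  norm_num at *
  refine ⟨?_, ?_, ?_⟩ <;> linarith

theorem stmt_11 (a b c : Quaternion ℝ)
    (ha : a.re = 0) (hb : b.re = 0) (hc : c.re = 0)
    (hna : ‖a‖ = 1) (hnb : ‖b‖ = 1) (hnc : ‖c‖ = 1)
    (h : ∀ x y : Quaternion ℝ,
        b * y * (a * star x * star a - c * star x * star c) * c =
          y * (a * star x * star a - c * star x * star c)) :
    c = a ∨ c = -a := by
  have hsa : star a = -a := Quaternion.star_eq_neg.2 ha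
  have hsb : star b = -b := Quaternion.star_eq_neg.2 hb
  have hsc : star c = -c := Quaternion.star_eq_neg.2 hc
  have nsa : Quaternion.normSq a = 1 := by
    rw [Quaternion.normSq_eq_norm_mul_self, hna]; ring
  have nsb : Quaternion.normSq b = 1 := by
    rw [Quaternion.normSq_eq_norm_mul_self, hnb]; ring
  have nsc : Quaternion.normSq c = 1 := by
    rw [Quaternion.normSq_eq_norm_mul_self, hnc]; ring
  have haa : a * a = -1 := by
    have h0 := Quaternion.star_mul_self a
    rw [hsa, nsa, neg_mul] at h0
    have h2 : -(a*a) = 1 := by simpa using h0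
    rw [neg_eq_iff_eq_neg] at h2; exact h2
  have hbb : b * b = -1 := by
    have h0 := Quaternion.star_mul_self b
    rw [hsb, nsb, neg_mul] at h0
    have h2 : -(b*b) = 1 := by simpa using h0
    rw [neg_eq_iff_eq_neg] at h2; exact h2
  have hcc : c * c = -1 := by
    have h0 := Quaternion.star_mul_self c
    rw [hsc, nsc, neg_mul] at h0
    have h2 : -(c*c) = 1 := by simpa using h0
    rw [neg_eq_iff_eq_neg] at h2; exact h2
  by_cases hall : ∀ x : Quaternion ℝ, a * star x * star a = c * star x * star c
  · have hall' : ∀ z : Quaternion ℝ, a * z * a = c * z * c := fun z => by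
      have := hall (star z); simpa [hsa, hsc] using this
    have hu : ∀ z : Quaternion ℝ, (c * a) * z = z * (c * a) := by
      intro z
      have h1 := hall' z
      have h2 : c * (a * z * a) * a = c * (c * z * c) * a := by rw [h1]
      have e1 : c * (a * z * a) * a = (c * a * z) * (a * a) := by noncomm_ring
      have e2 : c * (c * z * c) * a = (c * c) * (z * (c * a)) := by noncomm_ring
      rw [e1, e2, haa, hcc] at h2
      simpa using h2
    have hreal := central_real _ hu
    set t := (c*a).re with ht
    have hca : c * a = (t : Quaternion ℝ) := hreal
    have hne : ‖c * a‖ = 1 := by rw [norm_mul, hnc, hna]; ring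
    have habs : |t| = 1 := by
      rw [hca] at hne; simpa [Quaternion.norm_coe] using hne
    have hc_eq : c = -((t : Quaternion ℝ) * a) := by
      have h1 : c * a * a = (t : Quaternion ℝ) * a := by rw [hca]
      rw [mul_assoc, haa] at h1
      have h2 : -c = (t:Quaternion ℝ) * a := by simpa using h1
      rw [neg_eq_iff_eq_neg] at h2
      exact h2
    rcases (abs_eq (by norm_num : (0:ℝ) ≤ 1)).1 habs with h1 | h1
    · right; rw [hc_eq, h1]; norm_num
    · left; rw [hc_eq, h1]; push_cast; noncomm_ring
  · push_neg at hall
    obtain ⟨x, hx⟩ := hall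
    set q := a * star x * star a - c * star x * star c with hq
    have hq0 : q ≠ 0 := sub_ne_zero.2 hx
    exfalso
    have h1 : b * q * c = q := by simpa using h x 1
    have h2 : ∀ y, b * y * (q * c) = y * q := fun y => by
      have h3 := h x y; rw [← hq] at h3
      rw [← mul_assoc]; exact h3
    have hbq : q * c = -b * q := by
      have h3 : b * (b * q * c) = b * q := by rw [h1]
      have e1 : b * (b * q * c) = (b * b) * (q * c) := by noncomm_ring
      rw [e1, hbb] at h3
      have : -(q * c) = b * q := by simpa using h3
      rw [neg_eq_iff_eq_neg] at this
      rw [this]; noncomm_ring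
    have hbyb : ∀ y : Quaternion ℝ, b * y * b = -y := by
      intro y
      have h3 := h2 y
      rw [hbq] at h3
      have e1 : b * y * (-b * q) = (-(b * y * b)) * q := by noncomm_ring
      rw [e1] at h3
      have h4 := mul_right_cancel₀ hq0 h3
      rw [neg_eq_iff_eq_neg] at h4
      exact h4
    have hcomm : ∀ y : Quaternion ℝ, b * y = y * b := by
      intro y
      have h3 : b * y * (b * b) = -y * b := by rw [← mul_assoc, hbyb]
      rw [hbb] at h3
      have h4 : -(b*y) = -y * b := by
        rw [← h3]; noncomm_ring
      have h5 : -(b*y) = -(y*b) := by rw [h4]; noncomm_ring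
      exact neg_injective h5
    have hbreal := central_real b hcomm
    rw [hb] at hbreal
    rw [hbreal] at hnb
    simp at hnb
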